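/- If a value Φ satisfies fairness and the k-nullifying null player property, then Φ satisfies symmetry. -/
import Mathlib

open Finset

/-- fairness and the `k`-nullifying null player property imply symmetry. -/
theorem fairness_kNNPP_implies_symmetry (n k : ℕ) (hk : 1 ≤ k) (hkn : k ≤ n)
    (Φ : (Finset (Fin n) → ℝ) → Fin n → ℝ)
    (hF : ∀ v w : Finset (Fin n) → ℝ, v ∅ = 0 → w ∅ = 0 → ∀ i j : Fin n,
      (∀ S ∈ (Finset.univ \ {i, j} : Finset (Fin n)).powerset,
        w (insert i S) = w (insert j S)) →
      Φ (v + w) i - Φ v i = Φ (v + w) j - Φ v j)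
    (hNNPP : ∀ v : Finset (Fin n) → ℝ, v ∅ = 0 → ∀ i : Fin n,
      (∀ S ∈ (Finset.univ.erase i).powerset, S.card < k → v (insert i S) = 0) →
      (∀ S ∈ (Finset.univ.erase i).powerset, k ≤ S.card → v (insert i S) = v S) →
      Φ v i = 0) :
    ∀ v : Finset (Fin n) → ℝ, v ∅ = 0 → ∀ i j : Fin n,
      (∀ S ∈ (Finset.univ \ {i, j} : Finset (Fin n)).powerset,
        v (insert i S) = v (insert j S)) → Φ v i = Φ v j := by
  intro v hv0 i j hsym
  have hz : ∀ m : Fin n, Φ (fun _ => (0:ℝ)) m = 0 := fun m =>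
    hNNPP (fun _ => 0) rfl m (fun _ _ _ => rfl) (fun _ _ _ => rfl)
  have h := hF (fun _ => 0) v rfl hv0 i j hsym
  have hsum : (fun _ => (0:ℝ)) + v = v := by funext S; simp
  rw [hsum, hz i, hz j] at h
  linarith
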